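/- If S is a finite universal signature, then AX+(S) is a sound and complete axiomatization for the language L(S) with respect to the class of finite GSEMs over S in which every instance of the axioms of AX+(S) is valid. -/

import Mathlib

namespace Causal

/-- A signature: exogenous variables `U`, endogenous variables `V`, a universe
of values `Val`, range functions `RU`, `RV`, and a set `Int` of allowed
interventions (partial assignments of in-range values to endogenous variables). -/
structure Signature : Type 1 where
  U : Type
  V : Type
  Val : Type
  RU : U → Set Val
  RV : V → Set Val
  RU_nonempty : ∀ Y, (RU Y).Nonempty
  RV_nonempty : ∀ X, (RV X).Nonempty
  Int : Set (V → Option Val)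
  Int_ok : ∀ I ∈ Int, ∀ X x, I X = some x → x ∈ RV X

variable {S : Signature}

/-- A finite signature: finitely many variables, each with finite range. -/
def Signature.IsFinite (S : Signature) : Prop :=
  Finite S.U ∧ Finite S.V ∧ (∀ Y, (S.RU Y).Finite) ∧ (∀ X, (S.RV X).Finite)

/-- An intervention is valid if it only sets variables to values in their ranges. -/
def ValidInt (S : Signature) (I : S.V → Option S.Val) : Prop :=
  ∀ X x, I X = some x → x ∈ S.RV X

/-- A universal signature: all (valid) interventions are allowed. -/
def Signature.Universal (S : Signature) : Prop :=
  S.Int = {I | ValidInt S I}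

/-- A context: an assignment of in-range values to the exogenous variables. -/
def Context (S : Signature) : Type := {u : S.U → S.Val // ∀ Y, u Y ∈ S.RU Y}

/-- An assignment of in-range values to the endogenous variables (an outcome). -/
def Assignment (S : Signature) : Type := {v : S.V → S.Val // ∀ X, v X ∈ S.RV X}

open Classical in
/-- `updInt I X x` is the intervention `I; X ← x`. -/
noncomputable def updInt (I : S.V → Option S.Val) (X : S.V) (x : S.Val) :
    S.V → Option S.Val :=
  fun Y => if Y = X then some x else I Y

/-- Events: Boolean combinations of primitive events `X = x` (with `x ∈ R(X)`). -/
inductive Event (S : Signature) : Type where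
  | tru : Event S
  | prim : (X : S.V) → (x : S.Val) → x ∈ S.RV X → Event S
  | not : Event S → Event S
  | and : Event S → Event S → Event S
  | or : Event S → Event S → Event S

namespace Event

def imp (a b : Event S) : Event S := Event.or (Event.not a) b

/-- Satisfaction of an event by an assignment. -/
def sat (v : Assignment S) : Event S → Prop
  | .tru => True
  | .prim X x _ => v.1 X = x
  | .not e => ¬ Event.sat v e
  | .and a b => Event.sat v a ∧ Event.sat v b
  | .or a b => Event.sat v a ∨ Event.sat v b

/-- Boolean evaluation of an event under an arbitrary valuation of its atoms;
used to define propositional tautologies. -/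
def evalB (val : S.V → S.Val → Bool) : Event S → Bool
  | .tru => true
  | .prim X x _ => val X x
  | .not e => !(Event.evalB val e)
  | .and a b => Event.evalB val a && Event.evalB val b
  | .or a b => Event.evalB val a || Event.evalB val b

/-- An event is a propositional tautology if it is true under every Boolean
valuation of its primitive events. -/
def Taut (e : Event S) : Prop := ∀ val, Event.evalB val e = true

/-- The value `x` of variable `X` is mentioned in the event. -/
def mentionsVal (X : S.V) (x : S.Val) : Event S → Prop
  | .tru => False
  | .prim X' x' _ => X' = X ∧ x' = x
  | .not e => Event.mentionsVal X x e
  | .and a b => Event.mentionsVal X x a ∨ Event.mentionsVal X x b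
  | .or a b => Event.mentionsVal X x a ∨ Event.mentionsVal X x b

def bigAnd (l : List (Event S)) : Event S := l.foldr Event.and Event.tru

def bigOr (l : List (Event S)) : Event S := l.foldr Event.or (Event.not Event.tru)

/-- The disjunction `⋁_{x ∈ l} X = x`. -/
def disjEq (X : S.V) (l : List {x : S.Val // x ∈ S.RV X}) : Event S :=
  bigOr (l.map fun x => Event.prim X x.1 x.2)

/-- The conjunction `⋀ X = x` over a list of (variable, value) pairs. -/
def conjEqL (l : List ((X : S.V) × {x : S.Val // x ∈ S.RV X})) : Event S :=
  bigAnd (l.map fun p => Event.prim p.1 p.2.1 p.2.2)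

/-- Conjunctive formulas: conjunctions of literals `X = x` and `X ≠ x`. -/
inductive Conjunctive : Event S → Prop
  | tru : Conjunctive Event.tru
  | eq (X x hx) : Conjunctive (Event.prim X x hx)
  | ne (X x hx) : Conjunctive (Event.not (Event.prim X x hx))
  | and {a b} : Conjunctive a → Conjunctive b → Conjunctive (Event.and a b)

/-- The set of conjuncts of a (conjunctive) formula. -/
def conjuncts : Event S → Set (Event S)
  | .tru => ∅
  | .and a b => Event.conjuncts a ∪ Event.conjuncts b
  | e => {e}

/-- Membership in the restricted language: only named variables and named values. -/
def InLang (W : Set S.V) (R' : S.V → Set S.Val) : Event S → Prop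
  | .tru => True
  | .prim X x _ => X ∈ W ∧ x ∈ R' X
  | .not e => Event.InLang W R' e
  | .and a b => Event.InLang W R' a ∧ Event.InLang W R' b
  | .or a b => Event.InLang W R' a ∧ Event.InLang W R' b

end Event

/-- Causal formulas: Boolean combinations of atomic formulas `[Y ← y]φ`
with `Y ← y` an allowed intervention and `φ` an event. -/
inductive CForm (S : Signature) : Type where
  | tru : CForm S
  | box : (I : S.V → Option S.Val) → I ∈ S.Int → Event S → CForm S
  | not : CForm S → CForm S
  | and : CForm S → CForm S → CForm S
  | or : CForm S → CForm S → CForm S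

namespace CForm

def imp (a b : CForm S) : CForm S := CForm.or (CForm.not a) b

def iff (a b : CForm S) : CForm S := CForm.and (imp a b) (imp b a)

/-- `⟨Y ← y⟩φ` abbreviates `¬[Y ← y]¬φ`. -/
def dia (I : S.V → Option S.Val) (hI : I ∈ S.Int) (e : Event S) : CForm S :=
  CForm.not (CForm.box I hI (Event.not e))

/-- Satisfaction of a causal formula at a context, relative to an outcome map `O`. -/
def sat (O : (I : S.V → Option S.Val) → I ∈ S.Int → Context S → Set (Assignment S))
    (u : Context S) : CForm S → Prop
  | .tru => True
  | .box I hI e => ∀ v ∈ O I hI u, e.sat v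
  | .not φ => ¬ CForm.sat O u φ
  | .and a b => CForm.sat O u a ∧ CForm.sat O u b
  | .or a b => CForm.sat O u a ∨ CForm.sat O u b

/-- Boolean evaluation of a causal formula under an arbitrary valuation of its
atomic formulas; used to define propositional tautologies. -/
def evalB (val : (S.V → Option S.Val) → Event S → Bool) : CForm S → Bool
  | .tru => true
  | .box I _ e => val I e
  | .not φ => !(CForm.evalB val φ)
  | .and a b => CForm.evalB val a && CForm.evalB val b
  | .or a b => CForm.evalB val a || CForm.evalB val b

/-- A causal formula is an instance of a propositional tautology if it is true
under every Boolean valuation of its atomic formulas. -/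
def Taut (φ : CForm S) : Prop := ∀ val, CForm.evalB val φ = true

/-- The value `x` of variable `X` is mentioned in the causal formula
(either in a primitive event or in an intervention). -/
def mentionsVal (X : S.V) (x : S.Val) : CForm S → Prop
  | .tru => False
  | .box I _ e => I X = some x ∨ e.mentionsVal X x
  | .not φ => CForm.mentionsVal X x φ
  | .and a b => CForm.mentionsVal X x a ∨ CForm.mentionsVal X x b
  | .or a b => CForm.mentionsVal X x a ∨ CForm.mentionsVal X x b

def bigAnd (l : List (CForm S)) : CForm S := l.foldr CForm.and CForm.tru

def bigOr (l : List (CForm S)) : CForm S := l.foldr CForm.or (CForm.not CForm.tru)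

/-- Membership in the restricted language `L_{W,R',I'}(S)`. -/
def InLang (W : Set S.V) (R' : S.V → Set S.Val) (I' : Set (S.V → Option S.Val)) :
    CForm S → Prop
  | .tru => True
  | .box I _ e => I ∈ I' ∧ e.InLang W R'
  | .not φ => CForm.InLang W R' I' φ
  | .and a b => CForm.InLang W R' I' a ∧ CForm.InLang W R' I' b
  | .or a b => CForm.InLang W R' I' a ∧ CForm.InLang W R' I' b

end CForm

/-- A structural equations model over `S`: each endogenous variable gets an
equation determining its value from the values of all other variables
(formally, `F X u v` does not depend on `v X`). -/
structure SEM (S : Signature) where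
  F : S.V → (S.U → S.Val) → (S.V → S.Val) → S.Val
  F_range : ∀ X uu vv, F X uu vv ∈ S.RV X
  F_indep_self : ∀ X uu vv vv', (∀ Y, Y ≠ X → vv Y = vv' Y) → F X uu vv = F X uu vv'

namespace SEM

/-- The outcomes of a SEM under an intervention: solutions of the modified equations. -/
def outcomes (M : SEM S) (u : Context S) (I : S.V → Option S.Val) :
    Set (Assignment S) :=
  {v | ∀ X, (∀ x, I X = some x → v.1 X = x) ∧ (I X = none → v.1 X = M.F X u.1 v.1)}

def sat (M : SEM S) (u : Context S) (φ : CForm S) : Prop :=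
  φ.sat (fun I _ u' => M.outcomes u' I) u

def Valid (M : SEM S) (φ : CForm S) : Prop := ∀ u, M.sat u φ

/-- `X` is independent of `Y` in context `uu`: the equation for `X` does not
depend on the value of `Y`. -/
def IndepAt (M : SEM S) (uu : S.U → S.Val) (X Y : S.V) : Prop :=
  ∀ vv vv', (∀ Z, Z ≠ Y → vv Z = vv' Z) → M.F X uu vv = M.F X uu vv'

/-- An acyclic (recursive) SEM. -/
def Acyclic (M : SEM S) : Prop :=
  ∀ u : Context S, ∃ lt : S.V → S.V → Prop, IsStrictTotalOrder S.V lt ∧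
    ∀ X Y, lt X Y → M.IndepAt u.1 X Y

end SEM

/-- A generalized structural equations model: an arbitrary (effective) map from
allowed interventions and contexts to sets of outcomes. -/
structure GSEM (S : Signature) where
  F : (I : S.V → Option S.Val) → I ∈ S.Int → Context S → Set (Assignment S)
  effective : ∀ I hI u v, v ∈ F I hI u → ∀ X x, I X = some x → v.1 X = x

namespace GSEM

def sat (M : GSEM S) (u : Context S) (φ : CForm S) : Prop :=
  φ.sat M.F u

def Valid (M : GSEM S) (φ : CForm S) : Prop := ∀ u, M.sat u φ

/-- A finitary GSEM: all outcome sets are finite. -/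
def Finitary (M : GSEM S) : Prop := ∀ I hI u, (M.F I hI u).Finite

end GSEM

/-- Equivalence of two GSEMs: same outcomes for all contexts and allowed interventions. -/
def GSEM.equiv (M M' : GSEM S) : Prop := ∀ I hI u, M.F I hI u = M'.F I hI u

/-- `L(S)`-equivalence of two GSEMs: they agree on all causal formulas. -/
def GSEM.LEquiv (M M' : GSEM S) : Prop := ∀ u φ, M.sat u φ ↔ M'.sat u φ

/-- Equivalence of a SEM and a GSEM. -/
def SEM.equivGSEM (M : SEM S) (M' : GSEM S) : Prop :=
  ∀ (I : S.V → Option S.Val) (hI : I ∈ S.Int) (u : Context S),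
    M.outcomes u I = M'.F I hI u

/-- The projection of an outcome set to a single variable. -/
def projSet (T : Set (Assignment S)) (Y : S.V) : Set S.Val := (fun v => v.1 Y) '' T

/-- The restriction of an outcome set to a set of variables. -/
def restrictSet (T : Set (Assignment S)) (Wv : Set S.V) : Set (Wv → S.Val) :=
  (fun (v : Assignment S) (Y : Wv) => v.1 Y.1) '' T

/-! ### Axiom schemas -/

/-- D0: all instances of propositional tautologies. -/
def AxD0 (S : Signature) : Set (CForm S) := {φ | φ.Taut}

/-- D1 (functionality): `[Y ← y](X = x ⇒ X ≠ x')` for `x ≠ x'`. -/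
def AxD1 (S : Signature) : Set (CForm S) :=
  {φ | ∃ (I : S.V → Option S.Val) (hI : I ∈ S.Int) (X : S.V) (x x' : S.Val)
      (hx : x ∈ S.RV X) (hx' : x' ∈ S.RV X), x ≠ x' ∧
    φ = CForm.box I hI (Event.imp (Event.prim X x hx) (Event.not (Event.prim X x' hx')))}

/-- D2 (definiteness): `[Y ← y](⋁_{x ∈ R(X)} X = x)`. -/
def AxD2 (S : Signature) : Set (CForm S) :=
  {φ | ∃ (I : S.V → Option S.Val) (hI : I ∈ S.Int) (X : S.V)
      (l : List {x : S.Val // x ∈ S.RV X}),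
    (∀ x : {x : S.Val // x ∈ S.RV X}, x ∈ l) ∧ φ = CForm.box I hI (Event.disjEq X l)}

/-- D3 (composition): `⟨X ← x⟩(W = w ∧ φ) ⇒ ⟨X ← x; W ← w⟩φ`. -/
def AxD3 (S : Signature) : Set (CForm S) :=
  {ψ | ∃ (I : S.V → Option S.Val) (hI : I ∈ S.Int) (W : S.V) (w : S.Val)
      (hw : w ∈ S.RV W) (hIW : updInt I W w ∈ S.Int) (e : Event S),
    ψ = CForm.imp (CForm.dia I hI (Event.and (Event.prim W w hw) e))
          (CForm.dia (updInt I W w) hIW e)}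

/-- D4 (effectiveness): `[X ← x](X = x)`. -/
def AxD4 (S : Signature) : Set (CForm S) :=
  {φ | ∃ (I : S.V → Option S.Val) (hI : I ∈ S.Int) (X : S.V) (x : S.Val)
      (hx : x ∈ S.RV X), I X = some x ∧ φ = CForm.box I hI (Event.prim X x hx)}

/-- D5 (reversibility), with `Z = V − (X ∪ {W, Y})`. -/
def AxD5 (S : Signature) : Set (CForm S) :=
  {φ | ∃ (I : S.V → Option S.Val) (hI : I ∈ S.Int) (Y : S.V) (y : S.Val)
      (hy : y ∈ S.RV Y) (W : S.V) (w : S.Val) (hw : w ∈ S.RV W)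
      (hIY : updInt I Y y ∈ S.Int) (hIW : updInt I W w ∈ S.Int)
      (lZ : List ((X : S.V) × {x : S.Val // x ∈ S.RV X})),
    (lZ.map Sigma.fst).Nodup ∧
    (∀ Z : S.V, (∃ p ∈ lZ, p.1 = Z) ↔ (I Z = none ∧ Z ≠ W ∧ Z ≠ Y)) ∧
    φ = CForm.imp
      (CForm.and
        (CForm.dia (updInt I Y y) hIY (Event.and (Event.prim W w hw) (Event.conjEqL lZ)))
        (CForm.dia (updInt I W w) hIW (Event.and (Event.prim Y y hy) (Event.conjEqL lZ))))
      (CForm.dia I hI (Event.and (Event.prim W w hw)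
        (Event.and (Event.prim Y y hy) (Event.conjEqL lZ))))}

/-- A disjunct of the formula `Y ⇝ Z` ("Y affects Z"). -/
noncomputable def ltComp (I : S.V → Option S.Val) (hI : I ∈ S.Int) (Y : S.V) (y : S.Val)
    (hIY : updInt I Y y ∈ S.Int) (Z : S.V) (z z' : S.Val)
    (hz : z ∈ S.RV Z) (hz' : z' ∈ S.RV Z) : CForm S :=
  CForm.and (CForm.box I hI (Event.prim Z z hz))
    (CForm.box (updInt I Y y) hIY (Event.prim Z z' hz'))

/-- `φ` is (an instance of) the formula `Y ⇝ Z`: the disjunction, over all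
interventions `X ← x`, values `y ∈ R(Y)` and `z ≠ z' ∈ R(Z)`, of
`[X ← x](Z = z) ∧ [X ← x; Y ← y](Z = z')`. -/
def IsLeadsTo (Y Z : S.V) (φ : CForm S) : Prop :=
  ∃ l : List (CForm S),
    (∀ ψ ∈ l, ∃ (I : S.V → Option S.Val) (hI : I ∈ S.Int) (y : S.Val)
        (_ : y ∈ S.RV Y) (hIY : updInt I Y y ∈ S.Int) (z z' : S.Val)
        (hz : z ∈ S.RV Z) (hz' : z' ∈ S.RV Z), z ≠ z' ∧
        ψ = ltComp I hI Y y hIY Z z z' hz hz') ∧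
    (∀ (I : S.V → Option S.Val) (hI : I ∈ S.Int) (y : S.Val), y ∈ S.RV Y →
      ∀ (hIY : updInt I Y y ∈ S.Int) (z z' : S.Val) (hz : z ∈ S.RV Z)
        (hz' : z' ∈ S.RV Z), z ≠ z' →
        ltComp I hI Y y hIY Z z z' hz hz' ∈ l) ∧
    φ = CForm.bigOr l

/-- D6 (recursiveness): `(X₀ ⇝ X₁ ∧ … ∧ X_{k−1} ⇝ X_k) ⇒ ¬(X_k ⇝ X₀)`. -/
def AxD6 (S : Signature) : Set (CForm S) :=
  {φ | ∃ (k : ℕ) (Xs : Fin (k+1) → S.V) (fs : Fin k → CForm S) (g : CForm S),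
    (∀ i : Fin k, IsLeadsTo (Xs i.castSucc) (Xs i.succ) (fs i)) ∧
    IsLeadsTo (Xs (Fin.last k)) (Xs 0) g ∧
    φ = CForm.imp (CForm.bigAnd (List.ofFn fs)) (CForm.not g)}

/-- D7 (distribution): `([X ← x]φ ∧ [X ← x](φ ⇒ ψ)) ⇒ [X ← x]ψ`. -/
def AxD7 (S : Signature) : Set (CForm S) :=
  {φ | ∃ (I : S.V → Option S.Val) (hI : I ∈ S.Int) (a b : Event S),
    φ = CForm.imp (CForm.and (CForm.box I hI a) (CForm.box I hI (Event.imp a b)))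
          (CForm.box I hI b)}

/-- D8 (generalization): `[X ← x]φ` for `φ` a propositional tautology. -/
def AxD8 (S : Signature) : Set (CForm S) :=
  {φ | ∃ (I : S.V → Option S.Val) (hI : I ∈ S.Int) (e : Event S), e.Taut ∧
    φ = CForm.box I hI e}

/-- D9 (unique outcomes for `V − {X}`): `⟨Y ← y⟩true ∧ (⟨Y ← y⟩φ ⇒ [Y ← y]φ)`
for `Y = V − {X}`. -/
def AxD9 (S : Signature) : Set (CForm S) :=
  {φ | ∃ (I : S.V → Option S.Val) (hI : I ∈ S.Int) (X : S.V) (e : Event S),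
    I X = none ∧ (∀ Z, Z ≠ X → I Z ≠ none) ∧
    φ = CForm.and (CForm.dia I hI Event.tru)
          (CForm.imp (CForm.dia I hI e) (CForm.box I hI e))}

/-- Halpern's version of D9: `⟨Y ← y⟩true ∧ ⋁_{x ∈ R(X)} [Y ← y](X = x)`
for `Y = V − {X}`. -/
def AxHD9 (S : Signature) : Set (CForm S) :=
  {φ | ∃ (I : S.V → Option S.Val) (hI : I ∈ S.Int) (X : S.V)
      (l : List {x : S.Val // x ∈ S.RV X}),
    I X = none ∧ (∀ Z, Z ≠ X → I Z ≠ none) ∧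
    (∀ x : {x : S.Val // x ∈ S.RV X}, x ∈ l) ∧
    φ = CForm.and (CForm.dia I hI Event.tru)
          (CForm.bigOr (l.map fun x => CForm.box I hI (Event.prim X x.1 x.2)))}

/-- D10(a) (at least one outcome): `⟨Y ← y⟩true`. -/
def AxD10a (S : Signature) : Set (CForm S) :=
  {φ | ∃ (I : S.V → Option S.Val) (hI : I ∈ S.Int), φ = CForm.dia I hI Event.tru}

/-- D10(b) (at most one outcome): `⟨Y ← y⟩φ ⇒ [Y ← y]φ`. -/
def AxD10b (S : Signature) : Set (CForm S) :=
  {φ | ∃ (I : S.V → Option S.Val) (hI : I ∈ S.Int) (e : Event S),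
    φ = CForm.imp (CForm.dia I hI e) (CForm.box I hI e)}

/-! ### The axiom schema D6⁺ -/

/-- `X_{-i} = ȳ` : the conjunction of `X_j = g j` over the indices `j ≠ i`. -/
def Event.conjEqVec {k : ℕ} (Xs : Fin k → S.V)
    (g : ∀ j : Fin k, {x : S.Val // x ∈ S.RV (Xs j)}) (i : Fin k) : Event S :=
  Event.bigAnd (((List.finRange k).filter (fun j => j ≠ i)).map
    fun j => Event.prim (Xs j) (g j).1 (g j).2)

/-- A disjunct of the formula `X_i ⇝_{I',U₁,…,U_k,X₁,…,X_k} X_{−i}`: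
`[I; X_i ← x](X_{−i} = ȳ) ∧ [I; X_i ← x'](X_{−i} ≠ ȳ)`. -/
noncomputable def affComp {k : ℕ} (Xs : Fin k → S.V) (i : Fin k) (I : S.V → Option S.Val)
    (x x' : {v : S.Val // v ∈ S.RV (Xs i)})
    (hx : updInt I (Xs i) x.1 ∈ S.Int) (hx' : updInt I (Xs i) x'.1 ∈ S.Int)
    (g : ∀ j : Fin k, {v : S.Val // v ∈ S.RV (Xs j)}) : CForm S :=
  CForm.and (CForm.box (updInt I (Xs i) x.1) hx (Event.conjEqVec Xs g i))
    (CForm.box (updInt I (Xs i) x'.1) hx' (Event.not (Event.conjEqVec Xs g i)))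

/-- `φ` is (an instance of) the formula `X_i ⇝_{I',U₁,…,U_k,X₁,…,X_k} X_{−i}`. -/
def IsAffects {k : ℕ} (Xs : Fin k → S.V) (Us : Fin k → Set S.Val)
    (Is : Set (S.V → Option S.Val)) (i : Fin k) (φ : CForm S) : Prop :=
  ∃ l : List (CForm S),
    (∀ ψ ∈ l, ∃ (I : S.V → Option S.Val) (x x' : {v : S.Val // v ∈ S.RV (Xs i)})
        (hx : updInt I (Xs i) x.1 ∈ S.Int) (hx' : updInt I (Xs i) x'.1 ∈ S.Int)
        (g : ∀ j : Fin k, {v : S.Val // v ∈ S.RV (Xs j)}),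
        I ∈ Is ∧ x.1 ∈ Us i ∧ x'.1 ∈ Us i ∧ (∀ j, j ≠ i → (g j).1 ∈ Us j) ∧
        ψ = affComp Xs i I x x' hx hx' g) ∧
    (∀ (I : S.V → Option S.Val), I ∈ Is →
      ∀ (x x' : {v : S.Val // v ∈ S.RV (Xs i)})
        (hx : updInt I (Xs i) x.1 ∈ S.Int) (hx' : updInt I (Xs i) x'.1 ∈ S.Int)
        (g : ∀ j : Fin k, {v : S.Val // v ∈ S.RV (Xs j)}),
        x.1 ∈ Us i → x'.1 ∈ Us i → (∀ j, j ≠ i → (g j).1 ∈ Us j) →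
        affComp Xs i I x x' hx hx' g ∈ l) ∧
    φ = CForm.bigOr l

/-- D6⁺: `⋁_{i=1}^k ¬(X_i ⇝_{I',U₁,…,U_k,X₁,…,X_k} X_{−i})`, one instance for
each finite choice of variables `X₁,…,X_k`, finite value sets `U_i ⊆ R(X_i)`,
and finite set `I'` of allowed interventions. -/
def AxD6p (S : Signature) : Set (CForm S) :=
  {φ | ∃ (k : ℕ) (Xs : Fin k → S.V) (Us : Fin k → Set S.Val)
      (Is : Set (S.V → Option S.Val)) (fs : Fin k → CForm S),
    (∀ j, Us j ⊆ S.RV (Xs j)) ∧ (∀ j, (Us j).Finite) ∧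
    Is ⊆ S.Int ∧ Is.Finite ∧
    (∀ i, IsAffects Xs Us Is i (fs i)) ∧
    φ = CForm.bigOr (List.ofFn fun i => CForm.not (fs i))}

/-! ### Axiom systems and provability -/

def AXplus (S : Signature) : Set (CForm S) :=
  AxD0 S ∪ AxD1 S ∪ AxD2 S ∪ AxD3 S ∪ AxD4 S ∪ AxD5 S ∪ AxD7 S ∪ AxD8 S ∪ AxD9 S

def AXplusRec (S : Signature) : Set (CForm S) :=
  AxD0 S ∪ AxD1 S ∪ AxD2 S ∪ AxD3 S ∪ AxD4 S ∪ AxD6 S ∪ AxD7 S ∪ AxD8 S ∪ AxD9 S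
    ∪ AxD10a S ∪ AxD10b S

def AXbasic (S : Signature) : Set (CForm S) :=
  AxD0 S ∪ AxD1 S ∪ AxD2 S ∪ AxD4 S ∪ AxD7 S ∪ AxD8 S

def AXbasicRec (S : Signature) : Set (CForm S) := AXbasic S ∪ AxD6p S

def AXminus (S : Signature) : Set (CForm S) :=
  AxD0 S ∪ AxD2 S ∪ AxD3 S ∪ AxD6 S ∪ AxD7 S ∪ AxD8 S ∪ AxD10a S ∪ AxD10b S

def AXEQ (S : Signature) : Set (CForm S) :=
  AxD0 S ∪ AxD1 S ∪ AxD2 S ∪ AxD7 S ∪ AxD8 S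

/-- Provability from a set of axioms, with modus ponens. -/
inductive Provable (Ax : Set (CForm S)) : CForm S → Prop
  | ax {φ} : φ ∈ Ax → Provable Ax φ
  | mp {φ ψ} : Provable Ax (CForm.imp φ ψ) → Provable Ax φ → Provable Ax ψ

/-- Provability from a set of axioms, with modus ponens and the inference rule
D2⁺, relative to named variables `W`, named values `R'`, and a language `L`. -/
inductive ProvableStar (Ax : Set (CForm S)) (W : Set S.V) (R' : S.V → Set S.Val)
    (L : Set (CForm S)) : CForm S → Prop
  | ax {φ} : φ ∈ Ax → ProvableStar Ax W R' L φ
  | mp {φ ψ} : ProvableStar Ax W R' L (CForm.imp φ ψ) → ProvableStar Ax W R' L φ →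
      ProvableStar Ax W R' L ψ
  | d2plus {φ : CForm S} {I : S.V → Option S.Val} {hI : I ∈ S.Int} {ψ : Event S}
      {X : S.V} (hXW : X ∈ W)
      (l : List {x : S.Val // x ∈ S.RV X})
      (hsub : ∀ x ∈ l, x.1 ∈ R' X)
      (hmem : ∀ (x : S.Val) (hx : x ∈ S.RV X),
        (CForm.imp φ (CForm.box I hI ψ)).mentionsVal X x →
        (⟨x, hx⟩ : {x : S.Val // x ∈ S.RV X}) ∈ l)
      (hfresh : (∃ x ∈ R' X, ¬ (CForm.imp φ (CForm.box I hI ψ)).mentionsVal X x) →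
        ∃ x ∈ l, ¬ (CForm.imp φ (CForm.box I hI ψ)).mentionsVal X x.1)
      (hL : CForm.imp φ (CForm.box I hI (Event.not ψ)) ∈ L)
      (hprem : ProvableStar Ax W R' L
        (CForm.imp φ (CForm.bigAnd (l.map fun x =>
          CForm.box I hI (Event.imp ψ (Event.not (Event.prim X x.1 x.2)))))))
      : ProvableStar Ax W R' L (CForm.imp φ (CForm.box I hI (Event.not ψ)))

/-! ### Properties of GSEMs -/

/-- Coherence: if `v` is an outcome of `X ← x` and `v` agrees with a finite
extension `X ← x; Y ← y` of the intervention, then `v` is an outcome of the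
extended intervention. -/
def GSEM.Coherent (M : GSEM S) : Prop :=
  ∀ (I₁ : S.V → Option S.Val) (h₁ : I₁ ∈ S.Int) (I₂ : S.V → Option S.Val)
    (h₂ : I₂ ∈ S.Int),
    (∀ X x, I₁ X = some x → I₂ X = some x) →
    {X | I₁ X = none ∧ I₂ X ≠ none}.Finite →
    ∀ (u : Context S) (v : Assignment S), v ∈ M.F I₁ h₁ u →
      (∀ X x, I₂ X = some x → v.1 X = x) → v ∈ M.F I₂ h₂ u

/-- Condition Acyc1 for a GSEM, a context, and a strict order on the variables. -/
def GSEM.Acyc1At (M : GSEM S) (u : Context S) (lt : S.V → S.V → Prop) : Prop :=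
  ∀ (X : S.V) (x x' : S.Val), x ∈ S.RV X → x' ∈ S.RV X →
    ∀ (I : S.V → Option S.Val), I ∈ S.Int →
      ∀ (hx : updInt I X x ∈ S.Int) (hx' : updInt I X x' ∈ S.Int),
        restrictSet (M.F (updInt I X x) hx u) {Y | lt Y X}
          = restrictSet (M.F (updInt I X x') hx' u) {Y | lt Y X}

/-- An acyclic GSEM: for each context there is a total order on the endogenous
variables satisfying Acyc1. -/
def GSEM.Acyclic (M : GSEM S) : Prop :=
  ∀ u : Context S, ∃ lt : S.V → S.V → Prop, IsStrictTotalOrder S.V lt ∧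
    M.Acyc1At u lt

/-! ### Consistency and acceptability -/

/-- A set of formulas is consistent with a provability notion `Pr` if the
negation of the conjunction of no finite subset is provable. -/
def Consistent (Pr : CForm S → Prop) (C : Set (CForm S)) : Prop :=
  ∀ l : List (CForm S), (∀ ψ ∈ l, ψ ∈ C) → ¬ Pr (CForm.not (CForm.bigAnd l))

def MaxConsistent (Pr : CForm S → Prop) (C : Set (CForm S)) : Prop :=
  Consistent Pr C ∧ ∀ ψ ∉ C, ¬ Consistent Pr (insert ψ C)

/-- `C` is acceptable for `⟨Y ← y⟩φ` with respect to `Z`: some conjunctive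
formula `ψ` extends the conjuncts of `φ`, contains a conjunct `Z = z` with `z`
a named value, and `⟨Y ← y⟩ψ ∈ C`. -/
def AcceptableFor (C : Set (CForm S)) (I : S.V → Option S.Val) (hI : I ∈ S.Int)
    (φ : Event S) (R' : S.V → Set S.Val) (Z : S.V) : Prop :=
  ∃ ψ : Event S, ψ.Conjunctive ∧ φ.conjuncts ⊆ ψ.conjuncts ∧
    (∃ (z : S.Val) (hz : z ∈ S.RV Z), z ∈ R' Z ∧ Event.prim Z z hz ∈ ψ.conjuncts) ∧
    CForm.dia I hI ψ ∈ C

end Causal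

namespace Causal

/-! ### Auxiliary machinery for the completeness proof -/

section CompletenessAux

open Classical

variable {S : Signature}

lemma mem_AXplus_d0 {φ : CForm S} (h : φ ∈ AxD0 S) : φ ∈ AXplus S := by
  simp only [AXplus, Set.mem_union]; tauto

lemma mem_AXplus_d1 {φ : CForm S} (h : φ ∈ AxD1 S) : φ ∈ AXplus S := by
  simp only [AXplus, Set.mem_union]; tauto

lemma mem_AXplus_d2 {φ : CForm S} (h : φ ∈ AxD2 S) : φ ∈ AXplus S := by
  simp only [AXplus, Set.mem_union]; tauto

lemma mem_AXplus_d4 {φ : CForm S} (h : φ ∈ AxD4 S) : φ ∈ AXplus S := by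
  simp only [AXplus, Set.mem_union]; tauto

lemma mem_AXplus_d7 {φ : CForm S} (h : φ ∈ AxD7 S) : φ ∈ AXplus S := by
  simp only [AXplus, Set.mem_union]; tauto

lemma mem_AXplus_d8 {φ : CForm S} (h : φ ∈ AxD8 S) : φ ∈ AXplus S := by
  simp only [AXplus, Set.mem_union]; tauto

lemma pr_taut {φ : CForm S} (h : φ.Taut) : Provable (AXplus S) φ :=
  Provable.ax (mem_AXplus_d0 h)

lemma evalB_bigAnd (val : (S.V → Option S.Val) → Event S → Bool) (l : List (CForm S)) :
    CForm.evalB val (CForm.bigAnd l) = true ↔ ∀ ψ ∈ l, CForm.evalB val ψ = true := by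
  induction l with
  | nil => simp [CForm.bigAnd, CForm.evalB]
  | cons a l ih =>
      simp only [CForm.bigAnd, List.foldr] at ih ⊢
      simp [CForm.evalB, Bool.and_eq_true, ih, List.forall_mem_cons]

lemma eevalB_bigAnd (val : S.V → S.Val → Bool) (l : List (Event S)) :
    Event.evalB val (Event.bigAnd l) = true ↔ ∀ e ∈ l, Event.evalB val e = true := by
  induction l with
  | nil => simp [Event.bigAnd, Event.evalB]
  | cons a l ih =>
      simp only [Event.bigAnd, List.foldr] at ih ⊢
      simp [Event.evalB, Bool.and_eq_true, ih, List.forall_mem_cons]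

/-- The canonical valuation of an assignment. -/
noncomputable def cval (v : Assignment S) : S.V → S.Val → Bool :=
  fun X x => @decide (v.1 X = x) (Classical.propDecidable _)

lemma cval_eq_true {v : Assignment S} {X : S.V} {x : S.Val} :
    cval v X x = true ↔ v.1 X = x := by
  simp [cval]

lemma sat_iff_cval {v : Assignment S} : ∀ {e : Event S},
    e.sat v ↔ Event.evalB (cval v) e = true := by
  intro e
  induction e with
  | tru => simp [Event.sat, Event.evalB]
  | prim X x h => simp [Event.sat, Event.evalB, cval]
  | not e ih => simp [Event.sat, Event.evalB, ih]
  | and a b iha ihb => simp [Event.sat, Event.evalB, iha, ihb]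
  | or a b iha ihb => simp [Event.sat, Event.evalB, iha, ihb]

/-- The list of atoms of an event. -/
def atomList : Event S → List ((X : S.V) × {x : S.Val // x ∈ S.RV X})
  | .tru => []
  | .prim X x h => [⟨X, x, h⟩]
  | .not e => atomList e
  | .and a b => atomList a ++ atomList b
  | .or a b => atomList a ++ atomList b

lemma mentions_iff_atomList : ∀ {e : Event S} {X : S.V} {x : S.Val},
    e.mentionsVal X x ↔ ∃ p ∈ atomList e, p.1 = X ∧ p.2.1 = x := by
  intro e
  induction e with
  | tru => simp [Event.mentionsVal, atomList]
  | prim X x h =>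
      intro X' x'
      simp [Event.mentionsVal, atomList]
  | not e ih => intro X x; exact ih
  | and a b iha ihb =>
      intro X x
      simp only [Event.mentionsVal, atomList, List.mem_append]
      rw [iha, ihb]
      constructor
      · rintro (⟨p, hp, h⟩ | ⟨p, hp, h⟩)
        exacts [⟨p, Or.inl hp, h⟩, ⟨p, Or.inr hp, h⟩]
      · rintro ⟨p, hp | hp, h⟩
        exacts [Or.inl ⟨p, hp, h⟩, Or.inr ⟨p, hp, h⟩]
  | or a b iha ihb =>
      intro X x
      simp only [Event.mentionsVal, atomList, List.mem_append]
      rw [iha, ihb]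
      constructor
      · rintro (⟨p, hp, h⟩ | ⟨p, hp, h⟩)
        exacts [⟨p, Or.inl hp, h⟩, ⟨p, Or.inr hp, h⟩]
      · rintro ⟨p, hp | hp, h⟩
        exacts [Or.inl ⟨p, hp, h⟩, Or.inr ⟨p, hp, h⟩]

lemma evalB_congr {val val' : S.V → S.Val → Bool} : ∀ {e : Event S},
    (∀ X x, e.mentionsVal X x → val X x = val' X x) →
    Event.evalB val e = Event.evalB val' e := by
  intro e
  induction e with
  | tru => intro _; rfl
  | prim X x h => intro hm; exact hm X x ⟨rfl, rfl⟩
  | not e ih => intro hm; simp only [Event.evalB]; rw [ih hm]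
  | and a b iha ihb =>
      intro hm
      simp only [Event.evalB]
      rw [iha (fun X x h => hm X x (Or.inl h)), ihb (fun X x h => hm X x (Or.inr h))]
  | or a b iha ihb =>
      intro hm
      simp only [Event.evalB]
      rw [iha (fun X x h => hm X x (Or.inl h)), ihb (fun X x h => hm X x (Or.inr h))]

/-- A maximal consistent set of causal formulas. -/
structure MCS (S : Signature) where
  Γ : Set (CForm S)
  con : Consistent (Provable (AXplus S)) Γ
  tot : ∀ ψ, ψ ∈ Γ ∨ CForm.not ψ ∈ Γ

namespace MCS

lemma not_both (m : MCS S) {ψ : CForm S} (h1 : ψ ∈ m.Γ) (h2 : CForm.not ψ ∈ m.Γ) :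
    False := by
  refine m.con [ψ, CForm.not ψ] ?_ (pr_taut ?_)
  · intro χ hχ
    rcases List.mem_cons.mp hχ with rfl | hχ
    · exact h1
    · rcases List.mem_cons.mp hχ with rfl | hχ
      · exact h2
      · exact absurd hχ List.not_mem_nil
  · intro val
    show (!(CForm.evalB val ψ && ((!(CForm.evalB val ψ)) && true))) = true
    cases CForm.evalB val ψ <;> rfl

lemma mem_of_pr (m : MCS S) {ψ : CForm S} (h : Provable (AXplus S) ψ) : ψ ∈ m.Γ := by
  by_contra hn
  have h2 : CForm.not ψ ∈ m.Γ := (m.tot ψ).resolve_left hn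
  refine m.con [CForm.not ψ] ?_ (Provable.mp (pr_taut ?_) h)
  · intro χ hχ
    rcases List.mem_cons.mp hχ with rfl | hχ
    · exact h2
    · exact absurd hχ List.not_mem_nil
  · intro val
    show ((!(CForm.evalB val ψ)) || (!((!(CForm.evalB val ψ)) && true))) = true
    cases CForm.evalB val ψ <;> rfl

lemma mp_mem (m : MCS S) {ψ χ : CForm S} (h : CForm.imp ψ χ ∈ m.Γ) (hψ : ψ ∈ m.Γ) :
    χ ∈ m.Γ := by
  by_contra hn
  have h2 : CForm.not χ ∈ m.Γ := (m.tot χ).resolve_left hn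
  refine m.con [ψ, CForm.imp ψ χ, CForm.not χ] ?_ (pr_taut ?_)
  · intro ρ hρ
    rcases List.mem_cons.mp hρ with rfl | hρ
    · exact hψ
    · rcases List.mem_cons.mp hρ with rfl | hρ
      · exact h
      · rcases List.mem_cons.mp hρ with rfl | hρ
        · exact h2
        · exact absurd hρ List.not_mem_nil
  · intro val
    show (!(CForm.evalB val ψ &&
      (((!(CForm.evalB val ψ)) || CForm.evalB val χ) &&
        ((!(CForm.evalB val χ)) && true)))) = true
    cases CForm.evalB val ψ <;> cases CForm.evalB val χ <;> rfl

lemma mp_pr (m : MCS S) {ψ χ : CForm S} (h : Provable (AXplus S) (CForm.imp ψ χ))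
    (hψ : ψ ∈ m.Γ) : χ ∈ m.Γ :=
  m.mp_mem (m.mem_of_pr h) hψ

lemma not_mem_iff (m : MCS S) {ψ : CForm S} : CForm.not ψ ∈ m.Γ ↔ ψ ∉ m.Γ :=
  ⟨fun h h' => m.not_both h' h, fun h => (m.tot ψ).resolve_left h⟩

lemma and_mem_iff (m : MCS S) {a b : CForm S} :
    CForm.and a b ∈ m.Γ ↔ a ∈ m.Γ ∧ b ∈ m.Γ := by
  constructor
  · intro h
    constructor
    · refine m.mp_pr (pr_taut ?_) h
      intro val
      show ((!(CForm.evalB val a && CForm.evalB val b)) || CForm.evalB val a) = true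
      cases CForm.evalB val a <;> cases CForm.evalB val b <;> rfl
    · refine m.mp_pr (pr_taut ?_) h
      intro val
      show ((!(CForm.evalB val a && CForm.evalB val b)) || CForm.evalB val b) = true
      cases CForm.evalB val a <;> cases CForm.evalB val b <;> rfl
  · rintro ⟨ha, hb⟩
    refine m.mp_mem (m.mp_pr (pr_taut ?_) ha) hb
    intro val
    show ((!(CForm.evalB val a)) ||
      ((!(CForm.evalB val b)) || (CForm.evalB val a && CForm.evalB val b))) = true
    cases CForm.evalB val a <;> cases CForm.evalB val b <;> rfl

lemma or_mem_iff (m : MCS S) {a b : CForm S} :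
    CForm.or a b ∈ m.Γ ↔ a ∈ m.Γ ∨ b ∈ m.Γ := by
  constructor
  · intro h
    by_contra hc
    push_neg at hc
    have hna : CForm.not a ∈ m.Γ := m.not_mem_iff.mpr hc.1
    have hnb : CForm.not b ∈ m.Γ := m.not_mem_iff.mpr hc.2
    have : CForm.not (CForm.or a b) ∈ m.Γ := by
      refine m.mp_mem (m.mp_pr (pr_taut ?_) hna) hnb
      intro val
      show ((!(!(CForm.evalB val a))) ||
        ((!(!(CForm.evalB val b))) || (!(CForm.evalB val a || CForm.evalB val b)))) = true
      cases CForm.evalB val a <;> cases CForm.evalB val b <;> rfl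
    exact m.not_both h this
  · rintro (h | h)
    · refine m.mp_pr (pr_taut ?_) h
      intro val
      show ((!(CForm.evalB val a)) || (CForm.evalB val a || CForm.evalB val b)) = true
      cases CForm.evalB val a <;> cases CForm.evalB val b <;> rfl
    · refine m.mp_pr (pr_taut ?_) h
      intro val
      show ((!(CForm.evalB val b)) || (CForm.evalB val a || CForm.evalB val b)) = true
      cases CForm.evalB val a <;> cases CForm.evalB val b <;> rfl

variable {I : S.V → Option S.Val} {hI : I ∈ S.Int}

lemma box_K (m : MCS S) {a b : Event S} (hab : CForm.box I hI (Event.imp a b) ∈ m.Γ)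
    (ha : CForm.box I hI a ∈ m.Γ) : CForm.box I hI b ∈ m.Γ := by
  have h7 : CForm.imp
      (CForm.and (CForm.box I hI a) (CForm.box I hI (Event.imp a b)))
      (CForm.box I hI b) ∈ AXplus S :=
    mem_AXplus_d7 ⟨I, hI, a, b, rfl⟩
  exact m.mp_mem (m.mem_of_pr (Provable.ax h7)) (m.and_mem_iff.mpr ⟨ha, hab⟩)

lemma box_taut (m : MCS S) {e : Event S} (h : e.Taut) : CForm.box I hI e ∈ m.Γ :=
  m.mem_of_pr (Provable.ax (mem_AXplus_d8 ⟨I, hI, e, h, rfl⟩))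

lemma box_mono (m : MCS S) {a b : Event S} (h : (Event.imp a b).Taut)
    (ha : CForm.box I hI a ∈ m.Γ) : CForm.box I hI b ∈ m.Γ :=
  m.box_K (m.box_taut h) ha

lemma box_and (m : MCS S) {a b : Event S} (ha : CForm.box I hI a ∈ m.Γ)
    (hb : CForm.box I hI b ∈ m.Γ) : CForm.box I hI (Event.and a b) ∈ m.Γ := by
  refine m.box_K (m.box_K (m.box_taut ?_) ha) hb
  intro val
  show ((!(Event.evalB val a)) ||
    ((!(Event.evalB val b)) || (Event.evalB val a && Event.evalB val b))) = true
  cases Event.evalB val a <;> cases Event.evalB val b <;> rfl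

lemma dia_mem_iff (m : MCS S) {e : Event S} :
    CForm.dia I hI e ∈ m.Γ ↔ CForm.box I hI (Event.not e) ∉ m.Γ :=
  m.not_mem_iff

lemma dia_box (m : MCS S) {a b : Event S} (ha : CForm.dia I hI a ∈ m.Γ)
    (hb : CForm.box I hI b ∈ m.Γ) : CForm.dia I hI (Event.and a b) ∈ m.Γ := by
  rw [dia_mem_iff] at ha ⊢
  intro hc
  apply ha
  refine m.box_mono ?_ (m.box_and hc hb)
  intro val
  show ((!((!(Event.evalB val a && Event.evalB val b)) && Event.evalB val b)) ||
    (!(Event.evalB val a))) = true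
  cases Event.evalB val a <;> cases Event.evalB val b <;> rfl

lemma dia_mono (m : MCS S) {a b : Event S} (h : (Event.imp a b).Taut)
    (ha : CForm.dia I hI a ∈ m.Γ) : CForm.dia I hI b ∈ m.Γ := by
  rw [dia_mem_iff] at ha ⊢
  intro hc
  apply ha
  refine m.box_mono ?_ hc
  intro val
  have hv := h val
  revert hv
  show ((!(Event.evalB val a)) || Event.evalB val b) = true →
    ((!(!(Event.evalB val b))) || (!(Event.evalB val a))) = true
  cases Event.evalB val a <;> cases Event.evalB val b <;> simp

lemma dia_false (m : MCS S) {e : Event S} (h : (Event.not e).Taut)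
    (hd : CForm.dia I hI e ∈ m.Γ) : False :=
  (m.dia_mem_iff.mp hd) (m.box_taut h)

lemma dia_or (m : MCS S) {a b : Event S} (h : CForm.dia I hI (Event.or a b) ∈ m.Γ) :
    CForm.dia I hI a ∈ m.Γ ∨ CForm.dia I hI b ∈ m.Γ := by
  by_contra hc
  push_neg at hc
  have hna : CForm.box I hI (Event.not a) ∈ m.Γ :=
    by_contra fun hh => hc.1 (m.dia_mem_iff.mpr hh)
  have hnb : CForm.box I hI (Event.not b) ∈ m.Γ :=
    by_contra fun hh => hc.2 (m.dia_mem_iff.mpr hh)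
  refine (m.dia_mem_iff.mp h) (m.box_mono ?_ (m.box_and hna hnb))
  intro val
  show ((!((!(Event.evalB val a)) && (!(Event.evalB val b)))) ||
    (!(Event.evalB val a || Event.evalB val b))) = true
  cases Event.evalB val a <;> cases Event.evalB val b <;> rfl

lemma box_bigAnd (m : MCS S) : ∀ {l : List (Event S)},
    (∀ a ∈ l, CForm.box I hI a ∈ m.Γ) → CForm.box I hI (Event.bigAnd l) ∈ m.Γ := by
  intro l
  induction l with
  | nil => intro _; exact m.box_taut (fun _ => rfl)
  | cons a l ih =>
      intro h
      exact m.box_and (h a (List.mem_cons_self))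
        (ih fun b hb => h b (List.mem_cons_of_mem _ hb))

lemma dia_and_bigOr (m : MCS S) : ∀ (l : List (Event S)) (g : Event S),
    CForm.dia I hI (Event.and g (Event.bigOr l)) ∈ m.Γ →
    ∃ a ∈ l, CForm.dia I hI (Event.and g a) ∈ m.Γ := by
  intro l
  induction l with
  | nil =>
      intro g hg
      exfalso
      refine m.dia_false ?_ hg
      intro val
      show (!(Event.evalB val g && (!true))) = true
      cases Event.evalB val g <;> rfl
  | cons a l ih =>
      intro g hg
      have hsplit : CForm.dia I hI
          (Event.or (Event.and g a) (Event.and g (Event.bigOr l))) ∈ m.Γ := by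
        refine m.dia_mono ?_ hg
        intro val
        show ((!(Event.evalB val g && (Event.evalB val a || Event.evalB val (Event.bigOr l)))) ||
          ((Event.evalB val g && Event.evalB val a) ||
            (Event.evalB val g && Event.evalB val (Event.bigOr l)))) = true
        cases Event.evalB val g <;> cases Event.evalB val a <;>
          cases Event.evalB val (Event.bigOr l) <;> rfl
      rcases m.dia_or hsplit with h | h
      · exact ⟨a, List.mem_cons_self, h⟩
      · obtain ⟨b, hb, hdb⟩ := ih g h
        exact ⟨b, List.mem_cons_of_mem _ hb, hdb⟩

end MCS

/-- The full description of an assignment, as an event. -/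
def descE (lV : List S.V) (v : Assignment S) : Event S :=
  Event.bigAnd (lV.map fun X => Event.prim X (v.1 X) (v.2 X))

lemma descE_val {lV : List S.V} {v : Assignment S} {val : S.V → S.Val → Bool}
    (hd : Event.evalB val (descE lV v) = true) {X : S.V} (hX : X ∈ lV) :
    val X (v.1 X) = true := by
  rw [descE, eevalB_bigAnd] at hd
  exact hd _ (List.mem_map_of_mem hX)

lemma core_unsat (m : MCS S) (lV : List S.V) (hlV : ∀ X, X ∈ lV)
    {I : S.V → Option S.Val} {hI : I ∈ S.Int} (v : Assignment S) (e : Event S)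
    (hsat : ¬ e.sat v)
    (hd : CForm.dia I hI (Event.and (descE lV v) e) ∈ m.Γ) : False := by
  classical
  set D : Event S := Event.bigAnd (((atomList e).filter (fun p => p.2.1 ≠ v.1 p.1)).map
    (fun p => Event.imp (Event.prim p.1 (v.1 p.1) (v.2 p.1))
      (Event.not (Event.prim p.1 p.2.1 p.2.2)))) with hD
  have hboxD : CForm.box I hI D ∈ m.Γ := by
    apply m.box_bigAnd
    intro a ha
    rcases List.mem_map.mp ha with ⟨p, hp, rfl⟩
    have hne : p.2.1 ≠ v.1 p.1 := by simpa using (List.mem_filter.mp hp).2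
    exact m.mem_of_pr (Provable.ax (mem_AXplus_d1
      ⟨I, hI, p.1, v.1 p.1, p.2.1, v.2 p.1, p.2.2, Ne.symm hne, rfl⟩))
  have hd2 := m.dia_box hd hboxD
  refine m.dia_false ?_ hd2
  intro val
  show (!(Event.evalB val (Event.and (Event.and (descE lV v) e) D))) = true
  rw [Bool.not_eq_true']
  rcases Bool.eq_false_or_eq_true
    (Event.evalB val (Event.and (Event.and (descE lV v) e) D)) with h | h
  swap
  · exact h
  exfalso
  rw [show Event.evalB val (Event.and (Event.and (descE lV v) e) D) =
    ((Event.evalB val (descE lV v) && Event.evalB val e) && Event.evalB val D) from rfl,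
    Bool.and_eq_true, Bool.and_eq_true] at h
  obtain ⟨⟨hdesc, he⟩, hDv⟩ := h
  have hcongr : Event.evalB val e = Event.evalB (cval v) e := by
    apply evalB_congr
    intro X x hm
    rcases mentions_iff_atomList.mp hm with ⟨p, hp, hpX, hpx⟩
    obtain ⟨X', x'⟩ := p
    dsimp only at hpX hpx
    subst hpX
    subst hpx
    by_cases hxe : v.1 X' = x'.1
    · rw [show val X' x'.1 = val X' (v.1 X') by rw [hxe], descE_val hdesc (hlV X')]
      rw [show cval v X' x'.1 = true from cval_eq_true.mpr hxe]
    · have hpf : (⟨X', x'⟩ : (X : S.V) × {x : S.Val // x ∈ S.RV X}) ∈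
          (atomList e).filter (fun p => p.2.1 ≠ v.1 p.1) :=
        List.mem_filter.mpr ⟨hp, by
          simp only [decide_eq_true_eq]
          exact fun hh => hxe hh.symm⟩
      have hDel := (eevalB_bigAnd val _).mp hDv _ (List.mem_map_of_mem hpf)
      rw [show Event.evalB val (Event.imp (Event.prim X' (v.1 X') (v.2 X'))
          (Event.not (Event.prim X' x'.1 x'.2))) =
        ((!(val X' (v.1 X'))) || (!(val X' x'.1))) from rfl] at hDel
      rw [descE_val hdesc (hlV X')] at hDel
      have hvx : val X' x'.1 = false := by
        cases hvv : val X' x'.1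
        · rfl
        · rw [hvv] at hDel; exact absurd hDel (by simp)
      rw [hvx]
      have hcvf : cval v X' x'.1 = false := by
        cases hcv : cval v X' x'.1
        · rfl
        · exact absurd (cval_eq_true.mp hcv) hxe
      rw [hcvf]
  rw [hcongr] at he
  exact hsat (sat_iff_cval.mpr he)

/-- The canonical GSEM associated with a maximal consistent set. -/
noncomputable def canonM (m : MCS S) (lV : List S.V) (hlV : ∀ X, X ∈ lV) : GSEM S where
  F := fun I hI _ => {v | CForm.dia I hI (descE lV v) ∈ m.Γ}
  effective := by
    intro I hI u v hv X x hIX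
    by_contra hne
    have hx : x ∈ S.RV X := S.Int_ok I hI X x hIX
    have h4 : CForm.box I hI (Event.prim X x hx) ∈ m.Γ :=
      m.mem_of_pr (Provable.ax (mem_AXplus_d4 ⟨I, hI, X, x, hx, hIX, rfl⟩))
    exact core_unsat m lV hlV v (Event.prim X x hx) hne (m.dia_box hv h4)

lemma extend (m : MCS S) (lR : ∀ X : S.V, List {x : S.Val // x ∈ S.RV X})
    (hlR : ∀ (X : S.V) (x : {x : S.Val // x ∈ S.RV X}), x ∈ lR X)
    {I : S.V → Option S.Val} {hI : I ∈ S.Int} :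
    ∀ (l : List S.V) (g : Event S), CForm.dia I hI g ∈ m.Γ →
      ∃ p : List ((X : S.V) × {x : S.Val // x ∈ S.RV X}),
        p.map Sigma.fst = l ∧ CForm.dia I hI (Event.and g (Event.conjEqL p)) ∈ m.Γ := by
  intro l
  induction l with
  | nil =>
      intro g hg
      refine ⟨[], rfl, m.dia_mono ?_ hg⟩
      intro val
      show ((!(Event.evalB val g)) || (Event.evalB val g && true)) = true
      cases Event.evalB val g <;> rfl
  | cons X l ih =>
      intro g hg
      have hd2 : CForm.box I hI (Event.disjEq X (lR X)) ∈ m.Γ :=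
        m.mem_of_pr (Provable.ax (mem_AXplus_d2 ⟨I, hI, X, lR X, hlR X, rfl⟩))
      have hcomb : CForm.dia I hI (Event.and g
          (Event.bigOr ((lR X).map fun x => Event.prim X x.1 x.2))) ∈ m.Γ :=
        m.dia_box hg hd2
      have hsplit := m.dia_and_bigOr _ g hcomb
      obtain ⟨a, ha, hda⟩ := hsplit
      obtain ⟨x, hx, rfl⟩ := List.mem_map.mp ha
      obtain ⟨p, hmap, hp⟩ := ih (Event.and g (Event.prim X x.1 x.2)) hda
      refine ⟨⟨X, x⟩ :: p, by simp [hmap], m.dia_mono ?_ hp⟩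
      intro val
      show ((!((Event.evalB val g && Event.evalB val (Event.prim X x.1 x.2)) &&
          Event.evalB val (Event.conjEqL p))) ||
        (Event.evalB val g && (Event.evalB val (Event.prim X x.1 x.2) &&
          Event.evalB val (Event.conjEqL p)))) = true
      cases Event.evalB val g <;> cases Event.evalB val (Event.prim X x.1 x.2) <;>
        cases Event.evalB val (Event.conjEqL p) <;> rfl

/-- Picking the value assigned to `X` by a list of (variable, value) pairs. -/
noncomputable def pickV (p : List ((X : S.V) × {x : S.Val // x ∈ S.RV X})) (X : S.V) :
    S.Val :=
  match p with
  | [] => (S.RV_nonempty X).choose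
  | q :: p => @dite _ (q.1 = X) (Classical.propDecidable _) (fun _ => q.2.1)
      (fun _ => pickV p X)

lemma pickV_mem (p : List ((X : S.V) × {x : S.Val // x ∈ S.RV X})) (X : S.V) :
    pickV p X ∈ S.RV X := by
  induction p with
  | nil => exact (S.RV_nonempty X).choose_spec
  | cons q p ih =>
      rw [pickV]
      split
      · next h => subst h; exact q.2.2
      · exact ih

lemma pickV_eq {p : List ((X : S.V) × {x : S.Val // x ∈ S.RV X})}
    (hnd : (p.map Sigma.fst).Nodup) {q : (X : S.V) × {x : S.Val // x ∈ S.RV X}}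
    (hq : q ∈ p) : pickV p q.1 = q.2.1 := by
  induction p with
  | nil => exact absurd hq List.not_mem_nil
  | cons r p ih =>
      rw [List.map_cons, List.nodup_cons] at hnd
      rw [pickV]
      rcases List.mem_cons.mp hq with rfl | hq'
      · rw [dif_pos rfl]
      · rw [dif_neg, ih hnd.2 hq']
        intro he
        exact hnd.1 (he ▸ List.mem_map_of_mem (f := Sigma.fst) hq')

lemma truth (m : MCS S) (lV : List S.V) (hlV : ∀ X, X ∈ lV) (hnd : lV.Nodup)
    (lR : ∀ X : S.V, List {x : S.Val // x ∈ S.RV X})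
    (hlR : ∀ (X : S.V) (x : {x : S.Val // x ∈ S.RV X}), x ∈ lR X)
    (u : Context S) : ∀ ψ : CForm S, (canonM m lV hlV).sat u ψ ↔ ψ ∈ m.Γ := by
  intro ψ
  induction ψ with
  | tru => exact ⟨fun _ => m.mem_of_pr (pr_taut fun _ => rfl), fun _ => trivial⟩
  | box I hI e =>
      constructor
      · intro hs
        by_contra hmem
        have hnot : CForm.box I hI (Event.not (Event.not e)) ∉ m.Γ := by
          intro hc
          refine hmem (m.box_mono ?_ hc)
          intro val
          show ((!(!(!(Event.evalB val e)))) || Event.evalB val e) = true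
          cases Event.evalB val e <;> rfl
        have hdia : CForm.dia I hI (Event.not e) ∈ m.Γ := m.dia_mem_iff.mpr hnot
        obtain ⟨p, hmap, hp⟩ := extend m lR hlR lV (Event.not e) hdia
        set v : Assignment S := ⟨fun X => pickV p X, fun X => pickV_mem p X⟩
          with hvdef
        have hndp : (p.map Sigma.fst).Nodup := by rw [hmap]; exact hnd
        have hvq : ∀ q ∈ p, v.1 q.1 = q.2.1 := fun q hq => pickV_eq hndp hq
        have hcp_desc : ∀ val : S.V → S.Val → Bool,
            Event.evalB val (Event.conjEqL p) = true →
            Event.evalB val (descE lV v) = true := by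
          intro val hc
          rw [descE, eevalB_bigAnd]
          intro el hel
          rcases List.mem_map.mp hel with ⟨X, hX, rfl⟩
          have hXp : X ∈ p.map Sigma.fst := by rw [hmap]; exact hX
          rcases List.mem_map.mp hXp with ⟨q, hq, rfl⟩
          show val q.1 (v.1 q.1) = true
          rw [hvq q hq]
          have := (eevalB_bigAnd val _).mp hc _ (List.mem_map_of_mem hq)
          exact this
        have hdesc : CForm.dia I hI (descE lV v) ∈ m.Γ := by
          refine m.dia_mono ?_ hp
          intro val
          show ((!((!(Event.evalB val e)) && Event.evalB val (Event.conjEqL p))) ||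
            Event.evalB val (descE lV v)) = true
          rcases Bool.eq_false_or_eq_true
            ((!(Event.evalB val e)) && Event.evalB val (Event.conjEqL p)) with h | h
          · have h' := h
            rw [Bool.and_eq_true] at h'
            rw [h, hcp_desc val h'.2]; rfl
          · rw [h]; rfl
        have hse : e.sat v := hs v hdesc
        have hdne : CForm.dia I hI (Event.and (descE lV v) (Event.not e)) ∈ m.Γ := by
          refine m.dia_mono ?_ hp
          intro val
          show ((!((!(Event.evalB val e)) && Event.evalB val (Event.conjEqL p))) ||
            (Event.evalB val (descE lV v) && (!(Event.evalB val e)))) = true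
          rcases Bool.eq_false_or_eq_true
            ((!(Event.evalB val e)) && Event.evalB val (Event.conjEqL p)) with h | h
          · have h' := h
            rw [Bool.and_eq_true] at h'
            obtain ⟨h1, h2⟩ := h'
            rw [h, hcp_desc val h2, h1]; rfl
          · rw [h]; rfl
        exact core_unsat m lV hlV v (Event.not e) (fun hns => hns hse) hdne
      · intro hmem v hv
        by_contra hns
        exact core_unsat m lV hlV v e hns (m.dia_box hv hmem)
  | not ψ ih => exact Iff.trans (not_congr ih) m.not_mem_iff.symm
  | and a b iha ihb => exact Iff.trans (and_congr iha ihb) m.and_mem_iff.symm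
  | or a b iha ihb => exact Iff.trans (or_congr iha ihb) m.or_mem_iff.symm

lemma chain_bound {c : Set (Set (CForm S))} (hchain : IsChain (· ⊆ ·) c)
    (hcne : c.Nonempty) : ∀ l : List (CForm S), (∀ ψ ∈ l, ψ ∈ ⋃₀ c) →
      ∃ Γ₀ ∈ c, ∀ ψ ∈ l, ψ ∈ Γ₀ := by
  intro l
  induction l with
  | nil => exact fun _ => ⟨hcne.choose, hcne.choose_spec, by simp⟩
  | cons a l ih =>
      intro hl
      obtain ⟨Γ₁, hΓ₁, h1⟩ := ih fun ψ hψ => hl ψ (List.mem_cons_of_mem _ hψ)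
      obtain ⟨Γ₂, hΓ₂, ha⟩ := Set.mem_sUnion.mp (hl a (List.mem_cons_self))
      rcases hchain.total hΓ₁ hΓ₂ with h | h
      · refine ⟨Γ₂, hΓ₂, ?_⟩
        intro ψ hψ
        rcases List.mem_cons.mp hψ with rfl | hψ
        · exact ha
        · exact h (h1 _ hψ)
      · refine ⟨Γ₁, hΓ₁, ?_⟩
        intro ψ hψ
        rcases List.mem_cons.mp hψ with rfl | hψ
        · exact h ha
        · exact h1 _ hψ

lemma exists_mcs {φ : CForm S} (h : ¬ Provable (AXplus S) φ) :
    ∃ m : MCS S, CForm.not φ ∈ m.Γ := by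
  classical
  have hcon : Consistent (Provable (AXplus S)) {CForm.not φ} := by
    intro l hl hpr
    apply h
    refine Provable.mp (pr_taut ?_) hpr
    intro val
    show ((!(!(CForm.evalB val (CForm.bigAnd l)))) || CForm.evalB val φ) = true
    rcases Bool.eq_false_or_eq_true (CForm.evalB val φ) with hφ | hφ
    · rw [hφ]; simp
    · have hb : CForm.evalB val (CForm.bigAnd l) = true := by
        rw [evalB_bigAnd]
        intro ψ hψ
        have hψφ := hl ψ hψ
        rw [Set.mem_singleton_iff] at hψφ
        subst hψφ
        show (!(CForm.evalB val φ)) = true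
        rw [hφ]; rfl
      rw [hb]; rfl
  have hzorn := zorn_subset_nonempty
    {Γ : Set (CForm S) | CForm.not φ ∈ Γ ∧ Consistent (Provable (AXplus S)) Γ}
    ?_ {CForm.not φ} ⟨rfl, hcon⟩
  · obtain ⟨Γ, _, hmaxl⟩ := hzorn
    have hΓA := hmaxl.1
    have hnφ : CForm.not φ ∈ Γ := hΓA.1
    have htot : ∀ ψ, ψ ∈ Γ ∨ CForm.not ψ ∈ Γ := by
      intro ψ
      by_contra hcc
      push_neg at hcc
      obtain ⟨h1, h2⟩ := hcc
      have hins : ∀ χ : CForm S, χ ∉ Γ → ∃ l : List (CForm S),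
          (∀ ρ ∈ l, ρ ∈ insert χ Γ) ∧
          Provable (AXplus S) (CForm.not (CForm.bigAnd l)) := by
        intro χ hχ
        by_contra hno
        push_neg at hno
        have hmemA : insert χ Γ ∈
            {Γ : Set (CForm S) | CForm.not φ ∈ Γ ∧ Consistent (Provable (AXplus S)) Γ} :=
          ⟨Set.mem_insert_of_mem _ hnφ, fun l hl => hno l hl⟩
        have hsub2 := hmaxl.2 hmemA (Set.subset_insert _ _)
        exact hχ (hsub2 (Set.mem_insert _ _))
      obtain ⟨l₁, hl₁, hp₁⟩ := hins ψ h1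
      obtain ⟨l₂, hl₂, hp₂⟩ := hins (CForm.not ψ) h2
      set l₁' := l₁.filter (fun χ => χ ≠ ψ) with hl1'
      set l₂' := l₂.filter (fun χ => χ ≠ CForm.not ψ) with hl2'
      have hmem12 : ∀ ρ ∈ l₁' ++ l₂', ρ ∈ Γ := by
        intro ρ hρ
        rcases List.mem_append.mp hρ with hρ | hρ
        · obtain ⟨hin, hne⟩ := List.mem_filter.mp hρ
          rcases Set.mem_insert_iff.mp (hl₁ ρ hin) with hh | hh
          · exact absurd hh (by simpa using hne)
          · exact hh
        · obtain ⟨hin, hne⟩ := List.mem_filter.mp hρ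
          rcases Set.mem_insert_iff.mp (hl₂ ρ hin) with hh | hh
          · exact absurd hh (by simpa using hne)
          · exact hh
      refine hΓA.2 (l₁' ++ l₂') hmem12 ?_
      refine Provable.mp (Provable.mp (pr_taut ?_) hp₁) hp₂
      intro val
      show ((!(!(CForm.evalB val (CForm.bigAnd l₁)))) ||
        ((!(!(CForm.evalB val (CForm.bigAnd l₂)))) ||
          (!(CForm.evalB val (CForm.bigAnd (l₁' ++ l₂')))))) = true
      rcases Bool.eq_false_or_eq_true (CForm.evalB val (CForm.bigAnd (l₁' ++ l₂')))
        with h12 | h12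
      swap
      · rw [h12]; simp
      have hall := (evalB_bigAnd val _).mp h12
      rcases Bool.eq_false_or_eq_true (CForm.evalB val ψ) with hψv | hψv
      · have hb1 : CForm.evalB val (CForm.bigAnd l₁) = true := by
          rw [evalB_bigAnd]
          intro ρ hρ
          by_cases hr : ρ = ψ
          · subst hr; exact hψv
          · exact hall ρ (List.mem_append.mpr (Or.inl
              (List.mem_filter.mpr ⟨hρ, by simpa using hr⟩)))
        rw [hb1]; simp
      · have hb2 : CForm.evalB val (CForm.bigAnd l₂) = true := by
          rw [evalB_bigAnd]
          intro ρ hρ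
          by_cases hr : ρ = CForm.not ψ
          · subst hr
            show (!(CForm.evalB val ψ)) = true
            rw [hψv]; rfl
          · exact hall ρ (List.mem_append.mpr (Or.inr
              (List.mem_filter.mpr ⟨hρ, by simpa using hr⟩)))
        rw [hb2]; simp
    exact ⟨⟨Γ, hΓA.2, htot⟩, hnφ⟩
  · intro c hcA hchain hcne
    refine ⟨⋃₀ c, ⟨?_, ?_⟩, fun s hs => Set.subset_sUnion_of_mem hs⟩
    · obtain ⟨t, ht⟩ := hcne
      exact Set.mem_sUnion.mpr ⟨t, ht, (hcA ht).1⟩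
    · intro l hl
      obtain ⟨Γ₀, hΓ₀, hsub⟩ := chain_bound hchain hcne l hl
      exact (hcA hΓ₀).2 l hsub

end CompletenessAux


/-- If `S` is a finite universal signature, then `AX⁺(S)` is
sound and complete for `L(S)` with respect to the class of finite GSEMs over
`S` in which every instance of the axioms of `AX⁺(S)` is valid. -/
theorem axplus_sound_complete_GSEM_satisfying_axplus (S : Signature)
    (hfin : S.IsFinite) (huniv : S.Universal) (φ : CForm S) :
    Provable (AXplus S) φ ↔
      ∀ M : GSEM S, (∀ ψ ∈ AXplus S, M.Valid ψ) → M.Valid φ := by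
  constructor
  · intro hp M hax u
    induction hp with
    | ax h => exact hax _ h u
    | @mp a b hab ha ihab iha =>
        have h' : (¬ CForm.sat M.F u a) ∨ CForm.sat M.F u b := ihab
        rcases h' with h | h
        · exact absurd iha h
        · exact h
  · intro hv
    by_contra hnp
    obtain ⟨m, hm⟩ := exists_mcs hnp
    obtain ⟨_, hVfin, _, hRfin⟩ := hfin
    haveI : Finite S.V := hVfin
    haveI : Fintype S.V := Fintype.ofFinite S.V
    classical
    let lV : List S.V := Finset.univ.toList
    have hlV : ∀ X : S.V, X ∈ lV := fun X => by simp [lV, Finset.mem_toList]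
    have hnd : lV.Nodup := Finset.nodup_toList _
    haveI hft : ∀ X : S.V, Fintype {x : S.Val // x ∈ S.RV X} := fun X => (hRfin X).fintype
    let lR : ∀ X : S.V, List {x : S.Val // x ∈ S.RV X} :=
      fun X => (@Finset.univ _ (hft X)).toList
    have hlR : ∀ (X : S.V) (x : {x : S.Val // x ∈ S.RV X}), x ∈ lR X :=
      fun X x => by simp [lR, Finset.mem_toList]
    have hax : ∀ ψ ∈ AXplus S, (canonM m lV hlV).Valid ψ :=
      fun ψ h u => (truth m lV hlV hnd lR hlR u ψ).mpr (m.mem_of_pr (Provable.ax h))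
    let u₀ : Context S := ⟨fun Y => (S.RU_nonempty Y).choose,
      fun Y => (S.RU_nonempty Y).choose_spec⟩
    have hφΓ := (truth m lV hlV hnd lR hlR u₀ φ).mp (hv (canonM m lV hlV) hax u₀)
    exact m.not_both hφΓ hm

end Causal
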